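/- Let n be an even positive natural number that is not a power of 2, let n₂ be its 2-part, and set t = (n + n₂)/2. Then the binomial coefficient binom(t - 2, 2t - n - 1) = binom((n - n₂)/2 + n₂ - 2, n₂ - 1) is even, while binom(t - 2, 2t - n - 2) = binom((n - n₂)/2 + n₂ - 2, n₂ - 2) is odd. -/

import Mathlib

/-- `C(even, odd)` is even. -/
lemma choose_even_odd_even {N r : ℕ} (hN : Even N) (hr : Odd r) :
    Even (N.choose r) := by
  rcases Nat.lt_or_ge N r with h | h
  · simp [Nat.choose_eq_zero_of_lt h]
  · have hr1 : 1 ≤ r := hr.pos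
    have hN1 : 1 ≤ N := le_trans hr1 h
    have key : Nat.succ (N - 1) * (N - 1).choose (r - 1) = (Nat.succ (N - 1)).choose (Nat.succ (r - 1)) * Nat.succ (r - 1) := Nat.add_one_mul_choose_eq (N - 1) (r - 1)
    have hNs : Nat.succ (N - 1) = N := by omega
    have hrs : Nat.succ (r - 1) = r := by omega
    rw [hNs, hrs] at key
    -- key : N * (N-1).choose (r-1) = N.choose r * r
    have : Even (N.choose r * r) := by
      rw [← key]; exact hN.mul_right _
    rcases Nat.even_mul.mp this with h1 | h1
    · exact h1
    · exact absurd h1 (Nat.not_even_iff_odd.mpr hr)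

/-- `C((k+1)·2^v − 1, 2^v − 1)` is odd. -/
lemma choose_aux_odd (v : ℕ) : ∀ k : ℕ, Odd (((k + 1) * 2 ^ v - 1).choose (2 ^ v - 1)) := by
  induction v with
  | zero => intro k; simp
  | succ v ih =>
    intro k
    haveI : Fact (Nat.Prime 2) := ⟨Nat.prime_two⟩
    have hM : 1 ≤ (k + 1) * 2 ^ v := Nat.one_le_iff_ne_zero.mpr (by positivity)
    have hP : 1 ≤ 2 ^ v := Nat.one_le_two_pow
    have hNe : (k + 1) * 2 ^ (v + 1) - 1 = 2 * ((k + 1) * 2 ^ v) - 1 := by ring_nf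
    have hre : 2 ^ (v + 1) - 1 = 2 * 2 ^ v - 1 := by ring_nf
    have h := (Choose.choose_modEq_choose_mod_mul_choose_div_nat
      (n := (k + 1) * 2 ^ (v + 1) - 1) (k := 2 ^ (v + 1) - 1) (p := 2))
    have e1 : ((k + 1) * 2 ^ (v + 1) - 1) % 2 = 1 := by rw [hNe]; omega
    have e2 : (2 ^ (v + 1) - 1) % 2 = 1 := by rw [hre]; omega
    have e3 : ((k + 1) * 2 ^ (v + 1) - 1) / 2 = (k + 1) * 2 ^ v - 1 := by rw [hNe]; omega
    have e4 : (2 ^ (v + 1) - 1) / 2 = 2 ^ v - 1 := by rw [hre]; omega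
    rw [e1, e2, e3, e4] at h
    have hmod : ((k + 1) * 2 ^ (v + 1) - 1).choose (2 ^ (v + 1) - 1) % 2
        = ((k + 1) * 2 ^ v - 1).choose (2 ^ v - 1) % 2 := by
      simpa [Nat.ModEq] using h
    rw [Nat.odd_iff, hmod, ← Nat.odd_iff]
    exact ih k

/-- `C((k+1)·2^v − 2, 2^v − 2)` is odd for `v ≥ 1`. -/
lemma choose_aux_odd' (v k : ℕ) (hv : 1 ≤ v) :
    Odd (((k + 1) * 2 ^ v - 2).choose (2 ^ v - 2)) := by
  obtain ⟨w, rfl⟩ : ∃ w, v = w + 1 := ⟨v - 1, by omega⟩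
  haveI : Fact (Nat.Prime 2) := ⟨Nat.prime_two⟩
  have hM : 1 ≤ (k + 1) * 2 ^ w := Nat.one_le_iff_ne_zero.mpr (by positivity)
  have hP : 1 ≤ 2 ^ w := Nat.one_le_two_pow
  have hNe : (k + 1) * 2 ^ (w + 1) - 2 = 2 * ((k + 1) * 2 ^ w) - 2 := by ring_nf
  have hre : 2 ^ (w + 1) - 2 = 2 * 2 ^ w - 2 := by ring_nf
  have h := (Choose.choose_modEq_choose_mod_mul_choose_div_nat
    (n := (k + 1) * 2 ^ (w + 1) - 2) (k := 2 ^ (w + 1) - 2) (p := 2))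
  have e1 : ((k + 1) * 2 ^ (w + 1) - 2) % 2 = 0 := by rw [hNe]; omega
  have e2 : (2 ^ (w + 1) - 2) % 2 = 0 := by rw [hre]; omega
  have e3 : ((k + 1) * 2 ^ (w + 1) - 2) / 2 = (k + 1) * 2 ^ w - 1 := by rw [hNe]; omega
  have e4 : (2 ^ (w + 1) - 2) / 2 = 2 ^ w - 1 := by rw [hre]; omega
  rw [e1, e2, e3, e4] at h
  have hmod : ((k + 1) * 2 ^ (w + 1) - 2).choose (2 ^ (w + 1) - 2) % 2
      = ((k + 1) * 2 ^ w - 1).choose (2 ^ w - 1) % 2 := by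
    simpa [Nat.ModEq] using h
  rw [Nat.odd_iff, hmod, ← Nat.odd_iff]
  exact choose_aux_odd w k

/-- Let `n` be even, positive and not a power of `2`, let `n₂ = 2^(v₂ n)` be its `2`-part,
and `t = (n + n₂)/2`.  Then `C(t-2, 2t-n-1) = C((n-n₂)/2 + n₂ - 2, n₂ - 1)` is even, while
`C(t-2, 2t-n-2) = C((n-n₂)/2 + n₂ - 2, n₂ - 2)` is odd. -/
theorem choose_two_part_parity (n : ℕ) (hn : 0 < n) (heven : Even n)
    (hnp : ¬ ∃ m : ℕ, n = 2 ^ m)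
    (n₂ t : ℕ) (hn₂ : n₂ = 2 ^ (padicValNat 2 n)) (ht : t = (n + n₂) / 2) :
    (t - 2).choose (2 * t - n - 1) = ((n - n₂) / 2 + n₂ - 2).choose (n₂ - 1) ∧
    Even ((t - 2).choose (2 * t - n - 1)) ∧
    (t - 2).choose (2 * t - n - 2) = ((n - n₂) / 2 + n₂ - 2).choose (n₂ - 2) ∧
    Odd ((t - 2).choose (2 * t - n - 2)) := by
  have hfac : n.factorization 2 = padicValNat 2 n := Nat.factorization_def n Nat.prime_two
  have hsplit : 2 ^ padicValNat 2 n * (n / 2 ^ padicValNat 2 n) = n := by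
    conv_rhs => rw [← Nat.ordProj_mul_ordCompl_eq_self n 2]
    rw [hfac]
  have hodd : ¬ (2 ∣ n / 2 ^ padicValNat 2 n) := by
    have := Nat.not_dvd_ordCompl Nat.prime_two hn.ne'
    rwa [hfac] at this
  have hv1 : 1 ≤ padicValNat 2 n := one_le_padicValNat_of_dvd hn.ne' heven.two_dvd
  obtain ⟨v, hveq⟩ : ∃ v, padicValNat 2 n = v + 1 := ⟨padicValNat 2 n - 1, by omega⟩
  rw [hveq] at hsplit hodd hn₂
  set m := n / 2 ^ (v + 1) with hm
  have hm1 : m ≠ 1 := fun h => hnp ⟨v + 1, by rw [← hsplit, h, mul_one]⟩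
  have hmodd : m % 2 = 1 := Nat.not_even_iff.mp (fun h => hodd h.two_dvd)
  obtain ⟨k, hk⟩ : ∃ k, m = 2 * k + 1 := ⟨m / 2, by omega⟩
  have hk1 : 1 ≤ k := by omega
  have hP2 : 2 ≤ 2 ^ (v + 1) := by
    calc (2 : ℕ) = 2 ^ 1 := (pow_one 2).symm
    _ ≤ 2 ^ (v + 1) := Nat.pow_le_pow_right (by norm_num) (by omega)
  have hnPA : n = 2 * (2 ^ (v + 1) * k) + 2 ^ (v + 1) := by
    rw [← hsplit, hk]; ring
  have hPeven : Even (2 ^ (v + 1)) := ⟨2 ^ v, by ring⟩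
  have hAeven : Even (2 ^ (v + 1) * k) := hPeven.mul_right k
  obtain ⟨a, ha⟩ := hAeven
  obtain ⟨p, hp⟩ := hPeven
  have htval : t = 2 ^ (v + 1) * k + 2 ^ (v + 1) := by rw [ht, hnPA, hn₂]; omega
  have h1 : t - 2 = (n - n₂) / 2 + n₂ - 2 := by rw [htval, hnPA, hn₂]; omega
  have h2 : 2 * t - n - 1 = n₂ - 1 := by rw [htval, hnPA, hn₂]; omega
  have h3 : 2 * t - n - 2 = n₂ - 2 := by rw [htval, hnPA, hn₂]; omega
  have hAP : 2 ^ (v + 1) * k + 2 ^ (v + 1) - 2 = (k + 1) * 2 ^ (v + 1) - 2 := by ring_nf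
  refine ⟨by rw [h1, h2], ?_, by rw [h1, h3], ?_⟩
  · rw [h2, htval, hn₂]
    exact choose_even_odd_even ⟨a + p - 1, by omega⟩ ⟨p - 1, by omega⟩
  · rw [h3, htval, hn₂, hAP]
    exact choose_aux_odd' (v + 1) k (by omega)
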